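/- arXiv:2202.13909 — 2 statements merged into one kernel-verified Lean document; each statement's English description precedes it below -/
import Mathlib

section
/- Let p ∈ 𝔻 and λ ∈ ℂ with |λ| = 1, and let ξ_p(z) = √(1−|p|²)/(1 − conj(p)·z) and τ_p(z) = λ(p − z)/(1 − conj(p)·z), so that τ_p is an automorphism of 𝔻. Then the conjugate-linear map J W_{ξ_p,τ_p} on H², given by f ↦ conj(ξ_p(conj(z)) · f(τ_p(conj(z)))), is a conjugation on H² if and only if λp = conj(p). -/
open scoped ComplexConjugate InnerProductSpace ENNReal NNReal
open Complex Metric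

noncomputable section

abbrev H2 : Type := lp (fun _ : ℕ => ℂ) 2

namespace H2

/-- Evaluation of an element of `H²` (given by its sequence of Taylor coefficients)
at a point `z` of the unit disk: `f(z) = ∑ aₙ zⁿ`. -/
def eval (f : H2) (z : ℂ) : ℂ := ∑' n : ℕ, (f : ∀ _ : ℕ, ℂ) n * z ^ n

/-- The Szegő kernel function `K_w(z) = 1/(1 - conj w * z)`. -/
def ker (w z : ℂ) : ℂ := (1 - conj w * z)⁻¹

lemma kernel_memℓp (w : ℂ) (hw : ‖w‖ < 1) :
    Memℓp (fun n : ℕ => (conj w) ^ n) 2 := by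
  apply memℓp_gen
  have hsum : Summable (fun n : ℕ => (‖w‖ ^ 2) ^ n) :=
    summable_geometric_of_lt_one (by positivity) (by nlinarith [norm_nonneg w])
  refine hsum.congr fun n => ?_
  have h2 : ((2 : ℝ≥0∞).toReal) = ((2 : ℕ) : ℝ) := by simp
  rw [h2, Real.rpow_natCast]
  simp [norm_pow, ← pow_mul, Nat.mul_comm]

/-- The reproducing kernel of `H²` at `w` in the unit disk, as an element of `H²`. -/
def kernel (w : ℂ) : H2 :=
  if hw : ‖w‖ < 1 then ⟨fun n : ℕ => (conj w) ^ n, kernel_memℓp w hw⟩ else 0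

/-- `T` is the composition operator `C_φ` on `H²`. -/
def IsCompOp (φ : ℂ → ℂ) (T : H2 →L[ℂ] H2) : Prop :=
  ∀ f : H2, ∀ z : ℂ, ‖z‖ < 1 → eval (T f) z = eval f (φ z)

/-- `W` is the weighted composition operator `W_{ψ,φ}` on `H²`. -/
def IsWCompOp (ψ φ : ℂ → ℂ) (W : H2 →L[ℂ] H2) : Prop :=
  ∀ f : H2, ∀ z : ℂ, ‖z‖ < 1 → eval (W f) z = ψ z * eval f (φ z)

/-- A conjugation on `H²`: a conjugate-linear involution satisfying `⟪Cx, Cy⟫ = ⟪y, x⟫`. -/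
structure IsConjugation (C : H2 → H2) : Prop where
  map_add : ∀ x y : H2, C (x + y) = C x + C y
  map_smul : ∀ (c : ℂ) (x : H2), C (c • x) = conj c • C x
  invol : ∀ x : H2, C (C x) = x
  inner_conj : ∀ x y : H2, ⟪C x, C y⟫_ℂ = ⟪y, x⟫_ℂ

/-- `T` is `C`-normal: `C T* T C = T T*`. -/
def CNormal (C : H2 → H2) (T : H2 →L[ℂ] H2) : Prop :=
  ∀ x : H2, C ((ContinuousLinearMap.adjoint T) (T (C x)))
      = T ((ContinuousLinearMap.adjoint T) x)

/-- `T` is a normal operator: `T* T = T T*`. -/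
def IsNormalOp (T : H2 →L[ℂ] H2) : Prop :=
  (ContinuousLinearMap.adjoint T).comp T = T.comp (ContinuousLinearMap.adjoint T)

/-- `T` is a unitary operator. -/
def IsUnitaryOp (T : H2 →L[ℂ] H2) : Prop :=
  T.comp (ContinuousLinearMap.adjoint T) = ContinuousLinearMap.id ℂ H2 ∧
  (ContinuousLinearMap.adjoint T).comp T = ContinuousLinearMap.id ℂ H2

/-- `C` is the conjugation `J_μ` on `H²`: `(J_μ f)(z) = conj (f (μ * conj z))`. -/
def IsJmu (μ : ℂ) (C : H2 → H2) : Prop :=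
  ∀ f : H2, ∀ z : ℂ, ‖z‖ < 1 → eval (C f) z = conj (eval f (μ * conj z))

/-- `ξ_p(z) = √(1-|p|²) / (1 - conj p * z)`. -/
def xi (p z : ℂ) : ℂ := (Real.sqrt (1 - ‖p‖ ^ 2) : ℂ) / (1 - conj p * z)

/-- `τ_p(z) = λ (p - z) / (1 - conj p * z)`. -/
def tau (p lam z : ℂ) : ℂ := lam * (p - z) / (1 - conj p * z)

/-- `C` is the conjugation `J W_{ξ_p, τ_p}` on `H²`:
`(C f)(z) = conj (ξ_p(conj z) * f (τ_p (conj z)))`. -/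
def IsJW (p lam : ℂ) (C : H2 → H2) : Prop :=
  ∀ f : H2, ∀ z : ℂ, ‖z‖ < 1 →
    eval (C f) z = conj (xi p (conj z) * eval f (tau p lam (conj z)))

end H2

namespace H2

-- basic facts
lemma one_sub_ne_zero {a : ℂ} (ha : ‖a‖ < 1) : 1 - a ≠ 0 := by
  intro h
  have : (1:ℂ) = a := by linear_combination h
  rw [← this] at ha; simp at ha

lemma one_sub_mul_ne_zero {a b : ℂ} (ha : ‖a‖ < 1) (hb : ‖b‖ ≤ 1) : 1 - a * b ≠ 0 := by
  apply one_sub_ne_zero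
  calc ‖a * b‖ = ‖a‖ * ‖b‖ := norm_mul a b
    _ ≤ ‖a‖ * 1 := by gcongr
    _ < 1 := by simpa using ha

lemma norm_tau_lt_one {p lam z : ℂ} (hp : ‖p‖ < 1) (hlam : ‖lam‖ = 1) (hz : ‖z‖ < 1) :
    ‖tau p lam z‖ < 1 := by
  have hd : (1 : ℂ) - conj p * z ≠ 0 :=
    one_sub_mul_ne_zero (by simpa using hp) hz.le
  have key : normSq (p - z) < normSq (1 - conj p * z) := by
    have e1 : normSq (1 - conj p * z) - normSq (p - z)
        = (1 - normSq p) * (1 - normSq z) := by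
      simp only [normSq_sub, normSq_mul, normSq_conj, normSq_one, mul_one]
      have : (1 - conj p * z).re * 1 - ((1 - conj p * z).im * 0) = (1 - conj p * z).re := by ring
      simp only [normSq_apply, Complex.sub_re, Complex.sub_im, Complex.mul_re, Complex.mul_im,
        Complex.one_re, Complex.one_im, Complex.conj_re, Complex.conj_im]
      ring
    have hp2 : normSq p = ‖p‖^2 := by rw [normSq_eq_norm_sq]
    have hz2 : normSq z = ‖z‖^2 := by rw [normSq_eq_norm_sq]
    nlinarith [norm_nonneg p, norm_nonneg z, sq_nonneg ‖p‖, sq_nonneg ‖z‖, mul_pos (by nlinarith [norm_nonneg p] : (0:ℝ) < 1 - normSq p) (by nlinarith [norm_nonneg z] : (0:ℝ) < 1 - normSq z)]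
  have hnorm : ‖p - z‖ < ‖1 - conj p * z‖ := by
    have e1 : ‖p - z‖ = Real.sqrt (normSq (p - z)) := by rw [Complex.norm_def]
    have e2 : ‖1 - conj p * z‖ = Real.sqrt (normSq (1 - conj p * z)) := by
      rw [Complex.norm_def]
    rw [e1, e2]
    exact Real.sqrt_lt_sqrt (normSq_nonneg _) key
  have hpos : (0:ℝ) < ‖1 - conj p * z‖ := norm_pos_iff.mpr hd
  rw [tau, norm_div, norm_mul, hlam, one_mul, div_lt_one hpos]
  exact hnorm

end H2

namespace H2
open H2

lemma kernel_coe {w : ℂ} (hw : ‖w‖ < 1) :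
    (kernel w : ∀ _ : ℕ, ℂ) = fun n => (conj w) ^ n := by
  rw [kernel, dif_pos hw]

lemma eval_kernel {w z : ℂ} (hw : ‖w‖ < 1) (hz : ‖z‖ < 1) :
    eval (kernel w) z = (1 - conj w * z)⁻¹ := by
  rw [eval, kernel_coe hw]
  have : ∀ n : ℕ, (conj w) ^ n * z ^ n = (conj w * z) ^ n := fun n => (mul_pow _ _ n).symm
  rw [tsum_congr fun n => this n]
  exact tsum_geometric_of_norm_lt_one (by
    calc ‖conj w * z‖ = ‖w‖ * ‖z‖ := by rw [norm_mul, RCLike.norm_conj]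
      _ < 1 := by nlinarith [norm_nonneg w, norm_nonneg z])

lemma summable_eval (f : H2) {z : ℂ} (hz : ‖z‖ < 1) :
    Summable (fun n : ℕ => (f : ∀ _ : ℕ, ℂ) n * z ^ n) := by
  have hb : ∃ M, ∀ n, ‖(f : ∀ _ : ℕ, ℂ) n‖ ≤ M := by
    refine ⟨‖f‖, fun n => ?_⟩
    exact lp.norm_apply_le_norm (by norm_num) f n
  obtain ⟨M, hM⟩ := hb
  have hM0 : 0 ≤ M := le_trans (norm_nonneg _) (hM 0)
  apply Summable.of_norm
  have : Summable (fun n : ℕ => M * ‖z‖ ^ n) :=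
    (summable_geometric_of_lt_one (norm_nonneg z) hz).mul_left M
  refine this.of_nonneg_of_le (fun n => norm_nonneg _) fun n => ?_
  rw [norm_mul, norm_pow]
  exact mul_le_mul_of_nonneg_right (hM n) (by positivity)

lemma inner_kernel (f : H2) {w : ℂ} (hw : ‖w‖ < 1) :
    ⟪kernel w, f⟫_ℂ = eval f w := by
  rw [lp.inner_eq_tsum, eval]
  apply tsum_congr
  intro n
  rw [kernel_coe hw]
  simp [RCLike.inner_apply, mul_comm]

lemma inner_kernel_kernel {w v : ℂ} (hw : ‖w‖ < 1) (hv : ‖v‖ < 1) :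
    ⟪kernel w, kernel v⟫_ℂ = (1 - conj v * w)⁻¹ := by
  rw [inner_kernel _ hw, eval_kernel hv hw]

end H2

namespace H2

lemma sq_sqrt_one_sub (p : ℂ) (hp : ‖p‖ < 1) :
    ((Real.sqrt (1 - ‖p‖ ^ 2) : ℝ) : ℂ) ^ 2 = 1 - p * conj p := by
  have h0 : (0:ℝ) ≤ 1 - ‖p‖ ^ 2 := by nlinarith [norm_nonneg p]
  have : ((Real.sqrt (1 - ‖p‖ ^ 2) : ℝ) : ℂ) ^ 2 = ((1 - ‖p‖ ^ 2 : ℝ) : ℂ) := by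
    rw [← ofReal_pow, Real.sq_sqrt h0]
  rw [this, mul_conj]
  have : normSq p = ‖p‖ ^ 2 := by rw [normSq_eq_norm_sq]
  rw [this]
  push_cast
  ring

lemma sqrt_one_sub_ne_zero (p : ℂ) (hp : ‖p‖ < 1) :
    ((Real.sqrt (1 - ‖p‖ ^ 2) : ℝ) : ℂ) ≠ 0 := by
  have h0 : (0:ℝ) < 1 - ‖p‖ ^ 2 := by nlinarith [norm_nonneg p]
  simpa using (Real.sqrt_pos.mpr h0).ne'

theorem forward (p lam : ℂ) (hp : ‖p‖ < 1) (hlam : ‖lam‖ = 1)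
    (C : H2 → H2) (hC : IsConjugation C) (hJW : IsJW p lam C) : lam * p = conj p := by
  by_cases hp0 : p = 0
  · simp [hp0]
  have hq0 : conj p ≠ 0 := by simpa using hp0
  set s : ℂ := ((Real.sqrt (1 - ‖p‖ ^ 2) : ℝ) : ℂ) with hs
  have hs2 : s ^ 2 = 1 - p * conj p := sq_sqrt_one_sub p hp
  have hs0 : s ≠ 0 := sqrt_one_sub_ne_zero p hp
  set δ : H2 := kernel 0 with hδdef
  have hδ : ∀ z : ℂ, ‖z‖ < 1 → eval δ z = 1 := by
    intro z hz
    rw [hδdef, eval_kernel (by norm_num) hz]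
    simp
  have hτ0 : ‖tau p lam 0‖ < 1 := norm_tau_lt_one hp hlam (by norm_num)
  have h1 : eval (C (C δ)) 0 = 1 := by rw [hC.invol]; exact hδ 0 (by norm_num)
  have h2 : eval (C (C δ)) 0
      = conj (xi p (conj 0) * eval (C δ) (tau p lam (conj 0))) :=
    hJW (C δ) 0 (by norm_num)
  have hτ0' : ‖conj (tau p lam 0)‖ < 1 := by simpa using hτ0
  have h3 : eval (C δ) (tau p lam 0)
      = conj (xi p (conj (tau p lam 0))
          * eval δ (tau p lam (conj (tau p lam 0)))) := hJW δ _ hτ0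
  have h4 : eval δ (tau p lam (conj (tau p lam 0))) = 1 :=
    hδ _ (norm_tau_lt_one hp hlam hτ0')
  rw [h4, mul_one] at h3
  rw [map_zero, h3] at h2
  rw [h2] at h1
  -- now h1 : conj (xi p 0 * conj (xi p (conj (tau p lam 0)))) = 1
  have htau0 : tau p lam 0 = lam * p := by
    rw [tau]; simp
  rw [htau0] at h1
  have hxi0 : xi p 0 = s := by
    rw [xi]; simp only [mul_zero, sub_zero, div_one]; rfl
  rw [hxi0] at h1
  rw [xi] at h1
  rw [map_mul, Complex.conj_conj] at h1
  rw [Complex.conj_ofReal] at h1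
  set d : ℂ := 1 - conj p * conj (lam * p) with hd
  have h1' : s * (s / d) = 1 := h1
  have hdne : d ≠ 0 := by
    intro h
    rw [h, div_zero, mul_zero] at h1'
    exact one_ne_zero h1'.symm
  have hkey : s ^ 2 = d := by
    field_simp at h1'
    linear_combination h1'
  rw [hs2, hd] at hkey
  have hll : lam * conj lam = 1 := by
    rw [mul_conj]
    have : normSq lam = ‖lam‖ ^ 2 := by rw [normSq_eq_norm_sq]
    rw [this, hlam]; norm_num
  have : p * conj p = conj lam * conj p * conj p := by
    rw [map_mul] at hkey
    linear_combination -hkey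
  have hpl : p = conj lam * conj p := mul_right_cancel₀ hq0 this
  calc lam * p = lam * (conj lam * conj p) := by rw [← hpl]
    _ = (lam * conj lam) * conj p := by ring
    _ = conj p := by rw [hll, one_mul]

end H2

namespace H2

lemma eval_injective (f : H2) (h : ∀ w : ℂ, ‖w‖ < 1 → eval f w = 0) : f = 0 := by
  set c : ℕ → ℂ := (f : ∀ _ : ℕ, ℂ) with hc
  set q : FormalMultilinearSeries ℂ ℂ ℂ := FormalMultilinearSeries.ofScalars ℂ c with hq
  have hbound : ∀ n, ‖c n‖ ≤ ‖f‖ := fun n => lp.norm_apply_le_norm (by norm_num) f n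
  have hrad : (1/2 : ℝ≥0) ≤ q.radius := by
    apply q.le_radius_of_bound ‖f‖
    intro n
    have : ‖q n‖ = ‖c n‖ := FormalMultilinearSeries.ofScalars_norm ℂ c n
    rw [this]
    calc ‖c n‖ * (1/2 : ℝ≥0) ^ n ≤ ‖f‖ * 1 := by
          apply mul_le_mul (hbound n) ?_ (by positivity) (norm_nonneg f)
          · apply pow_le_one₀ (by positivity)
            norm_num
      _ = ‖f‖ := mul_one _
  have hradpos : 0 < q.radius := lt_of_lt_of_le (by norm_num) hrad
  have hball : HasFPowerSeriesOnBall q.sum q 0 q.radius :=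
    q.hasFPowerSeriesOnBall hradpos
  have hsum_eval : ∀ x : ℂ, q.sum x = eval f x := by
    intro x
    rw [FormalMultilinearSeries.sum, eval]
    exact tsum_congr fun n => by
      rw [FormalMultilinearSeries.ofScalars_apply_eq]; simp [mul_comm, hc]
  have hat : HasFPowerSeriesAt q.sum q 0 := hball.hasFPowerSeriesAt
  have hzero : HasFPowerSeriesAt 0 q 0 := by
    apply hat.congr
    filter_upwards [Metric.ball_mem_nhds (0:ℂ) one_pos] with x hx
    rw [Pi.zero_apply, hsum_eval x, h x (by simpa [dist_eq_norm] using hx)]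
  have hq0 : q = 0 := hzero.eq_zero
  have hc0 : c = 0 := by
    funext n
    have h1 : q n = 0 := by rw [hq0]; rfl
    rw [hq, FormalMultilinearSeries.ofScalars_eq_zero] at h1
    exact h1
  apply lp.ext
  rw [← hc, hc0]
  rfl

end H2

namespace H2

abbrev Dk : Type := {w : ℂ // ‖w‖ < 1}

def kfam : Dk → H2 := fun w => kernel w.1

def KSpan : Submodule ℂ H2 := Submodule.span ℂ (Set.range kfam)

lemma kspan_dense : Dense (KSpan : Set H2) := by
  rw [Submodule.dense_iff_topologicalClosure_eq_top]
  rw [Submodule.topologicalClosure_eq_top_iff]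
  rw [Submodule.eq_bot_iff]
  intro x hx
  apply eval_injective
  intro w hw
  rw [← inner_kernel x hw]
  have : kernel w ∈ KSpan := Submodule.subset_span ⟨⟨w, hw⟩, rfl⟩
  exact hx (kernel w) this

lemma eval_smul {z : ℂ} (hz : ‖z‖ < 1) (a : ℂ) (f : H2) :
    eval (a • f) z = a * eval f z := by
  rw [← inner_kernel _ hz, ← inner_kernel f hz, inner_smul_right]

lemma eval_add {z : ℂ} (hz : ‖z‖ < 1) (f g : H2) :
    eval (f + g) z = eval f z + eval g z := by
  rw [← inner_kernel _ hz, ← inner_kernel f hz, ← inner_kernel g hz, inner_add_right]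

lemma eval_continuous {z : ℂ} (hz : ‖z‖ < 1) :
    Continuous (fun f : H2 => eval f z) := by
  have : (fun f : H2 => eval f z) = fun f => ⟪kernel z, f⟫_ℂ := by
    funext f; rw [inner_kernel f hz]
  rw [this]
  exact continuous_const.inner continuous_id

end H2

namespace H2

section Backward

variable {p lam : ℂ}

def sC (p : ℂ) : ℂ := ((Real.sqrt (1 - ‖p‖ ^ 2) : ℝ) : ℂ)

lemma conj_sC : conj (sC p) = sC p := Complex.conj_ofReal _

lemma mul_conj_one (hlam : ‖lam‖ = 1) : lam * conj lam = 1 := by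
  rw [mul_conj]
  have : normSq lam = ‖lam‖ ^ 2 := by rw [normSq_eq_norm_sq]
  rw [this, hlam]; norm_num

lemma conj_tau_conj (z : ℂ) :
    conj (tau p lam (conj z)) = conj lam * (conj p - z) / (1 - p * z) := by
  rw [tau, map_div₀, map_mul, map_sub, map_sub, map_mul, map_one, Complex.conj_conj,
    Complex.conj_conj]

lemma tau_conj_eq (z : ℂ) :
    tau p lam (conj z) = lam * (p - conj z) / (1 - conj p * conj z) := rfl

-- the fundamental denominator identity
lemma hE (hp : ‖p‖ < 1) (hlam : ‖lam‖ = 1) {w v : ℂ} (hw : ‖w‖ < 1) (hv : ‖v‖ < 1) :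
    (1 - conj (tau p lam (conj v)) * tau p lam (conj w))
      * ((1 - p * v) * (1 - conj p * conj w))
    = sC p ^ 2 * (1 - conj w * v) := by
  have ha : (1:ℂ) - p * v ≠ 0 := one_sub_mul_ne_zero hp hv.le
  have hb : (1:ℂ) - conj p * conj w ≠ 0 :=
    one_sub_mul_ne_zero (by simpa using hp) (by simpa using hw.le)
  have hs2 : sC p ^ 2 = 1 - p * conj p := sq_sqrt_one_sub p hp
  have hll : lam * conj lam = 1 := mul_conj_one hlam
  have hlam0 : lam ≠ 0 := by intro h; rw [h] at hlam; simp at hlam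
  have hlinv : conj lam = lam⁻¹ := eq_inv_of_mul_eq_one_left (by rw [mul_comm]; exact hll)
  have ha' : (1:ℂ) - v * p ≠ 0 := by rw [mul_comm]; exact ha
  rw [conj_tau_conj, tau_conj_eq, hlinv, hs2]
  field_simp
  ring

lemma norm_kappa_lt_one (hp : ‖p‖ < 1) (hlam : ‖lam‖ = 1) {w : ℂ} (hw : ‖w‖ < 1) :
    ‖tau p lam (conj w)‖ < 1 :=
  norm_tau_lt_one hp hlam (by simpa using hw)

-- involution of kappa
lemma kappa_invol (hp : ‖p‖ < 1) (hlam : ‖lam‖ = 1) (hmain : lam * p = conj p)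
    {w : ℂ} (hw : ‖w‖ < 1) :
    tau p lam (conj (tau p lam (conj w))) = w := by
  have hlam0 : lam ≠ 0 := by intro h; rw [h] at hlam; simp at hlam
  have hll : lam * conj lam = 1 := mul_conj_one hlam
  have hlinv : conj lam = lam⁻¹ := eq_inv_of_mul_eq_one_left (by rw [mul_comm]; exact hll)
  have hY : ‖tau p lam (conj w)‖ < 1 := norm_kappa_lt_one hp hlam hw
  have hu : ‖conj (tau p lam (conj w))‖ < 1 := by simpa using hY
  have hden : (1:ℂ) - conj p * conj (tau p lam (conj w)) ≠ 0 :=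
    one_sub_mul_ne_zero (by simpa using hp) hu.le
  have hpw : (1:ℂ) - p * w ≠ 0 := one_sub_mul_ne_zero hp hw.le
  rw [tau, div_eq_iff hden, conj_tau_conj, hlinv, ← hmain]
  field_simp
  ring

def cf (p : ℂ) (w : ℂ) : ℂ := sC p / (1 - p * w)

lemma conj_cf (w : ℂ) : conj (cf p w) = sC p / (1 - conj p * conj w) := by
  rw [cf, map_div₀, conj_sC, map_sub, map_one, map_mul]

-- I2b
lemma cf_invol (hp : ‖p‖ < 1) (hlam : ‖lam‖ = 1) (hmain : lam * p = conj p)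
    {w : ℂ} (hw : ‖w‖ < 1) :
    conj (cf p w) * cf p (tau p lam (conj w)) = 1 := by
  have hs2 : sC p ^ 2 = 1 - p * conj p := sq_sqrt_one_sub p hp
  have hs0 : sC p ≠ 0 := sqrt_one_sub_ne_zero p hp
  have hqw : (1:ℂ) - conj p * conj w ≠ 0 :=
    one_sub_mul_ne_zero (by simpa using hp) (by simpa using hw.le)
  have hqw' : (1:ℂ) - lam * p * conj w ≠ 0 := by rw [hmain]; exact hqw
  have hs2' : sC p ^ 2 = 1 - p * (lam * p) := by rw [hs2, ← hmain]
  have h1 : (1 - p * tau p lam (conj w)) * (1 - lam * p * conj w) = sC p ^ 2 := by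
    have hqw'' : (1:ℂ) - p * lam * conj w ≠ 0 := by rw [mul_comm p lam]; exact hqw'
    rw [tau_conj_eq, ← hmain]
    field_simp
    linear_combination -hs2'
  rw [conj_cf, cf, div_mul_div_comm, ← hmain]
  rw [show (1 - lam * p * conj w) * (1 - p * tau p lam (conj w)) = sC p ^ 2 by
    linear_combination h1]
  rw [← sq]
  exact div_self (pow_ne_zero 2 hs0)

-- I1 core: inner of images
lemma inner_g_eq (hp : ‖p‖ < 1) (hlam : ‖lam‖ = 1) {w v : ℂ} (hw : ‖w‖ < 1) (hv : ‖v‖ < 1) :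
    ⟪cf p w • kernel (tau p lam (conj w)), cf p v • kernel (tau p lam (conj v))⟫_ℂ
      = ⟪kernel v, kernel w⟫_ℂ := by
  have hs2 : sC p ^ 2 = 1 - p * conj p := sq_sqrt_one_sub p hp
  have hs0 : sC p ≠ 0 := sqrt_one_sub_ne_zero p hp
  have hkw : ‖tau p lam (conj w)‖ < 1 := norm_kappa_lt_one hp hlam hw
  have hkv : ‖tau p lam (conj v)‖ < 1 := norm_kappa_lt_one hp hlam hv
  have hm : (1:ℂ) - conj (tau p lam (conj v)) * tau p lam (conj w) ≠ 0 :=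
    one_sub_mul_ne_zero (by simpa using hkv) hkw.le
  have hn : (1:ℂ) - conj w * v ≠ 0 :=
    one_sub_mul_ne_zero (by simpa using hw) hv.le
  have ha : (1:ℂ) - p * v ≠ 0 := one_sub_mul_ne_zero hp hv.le
  have hb : (1:ℂ) - conj p * conj w ≠ 0 :=
    one_sub_mul_ne_zero (by simpa using hp) (by simpa using hw.le)
  rw [inner_smul_left, inner_smul_right, inner_kernel_kernel hkw hkv,
    inner_kernel_kernel hv hw, conj_cf, cf]
  have key := hE hp hlam hw hv
  have hdm : ∀ a b X : ℂ, a / b * X⁻¹ = a / (b * X) := fun a b X => by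
    rw [div_eq_mul_inv, div_eq_mul_inv, mul_inv, mul_assoc]
  rw [← mul_assoc, div_mul_div_comm, hdm]
  rw [show ((1 - conj p * conj w) * (1 - p * v))
      * (1 - conj (tau p lam (conj v)) * tau p lam (conj w))
      = (sC p * sC p) * (1 - conj w * v) by linear_combination key]
  rw [div_mul_cancel_left₀ (by exact mul_ne_zero hs0 hs0)]

-- I3 : eval identity on kernels
lemma eval_g_eq (hp : ‖p‖ < 1) (hlam : ‖lam‖ = 1) (hmain : lam * p = conj p)
    {w z : ℂ} (hw : ‖w‖ < 1) (hz : ‖z‖ < 1) :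
    cf p w * (1 - conj (tau p lam (conj w)) * z)⁻¹
      = conj (xi p (conj z) * (1 - conj w * tau p lam (conj z))⁻¹) := by
  have hlam0 : lam ≠ 0 := by intro h; rw [h] at hlam; simp at hlam
  have hll : lam * conj lam = 1 := mul_conj_one hlam
  have hlinv : conj lam = lam⁻¹ := eq_inv_of_mul_eq_one_left (by rw [mul_comm]; exact hll)
  have hkw : ‖tau p lam (conj w)‖ < 1 := norm_kappa_lt_one hp hlam hw
  have hkz : ‖tau p lam (conj z)‖ < 1 := norm_kappa_lt_one hp hlam hz
  have hm : (1:ℂ) - conj (tau p lam (conj w)) * z ≠ 0 :=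
    one_sub_mul_ne_zero (by simpa using hkw) hz.le
  have hn : (1:ℂ) - conj w * tau p lam (conj z) ≠ 0 :=
    one_sub_mul_ne_zero (by simpa using hw) hkz.le
  have hn' : (1:ℂ) - w * conj (tau p lam (conj z)) ≠ 0 := by
    intro h
    apply hn
    have := congrArg conj h
    simpa [map_sub, map_mul] using this
  have ha : (1:ℂ) - p * w ≠ 0 := one_sub_mul_ne_zero hp hw.le
  have hc : (1:ℂ) - p * z ≠ 0 := one_sub_mul_ne_zero hp hz.le
  rw [map_mul, map_inv₀, map_sub, map_one, map_mul, Complex.conj_conj]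
  have hxi : conj (xi p (conj z)) = sC p / (1 - p * z) := by
    rw [xi, map_div₀, Complex.conj_ofReal, map_sub, map_one, map_mul, Complex.conj_conj,
      Complex.conj_conj]
    rfl
  rw [hxi, cf]
  have hdm : ∀ a b X : ℂ, a / b * X⁻¹ = a / (b * X) := fun a b X => by
    rw [div_eq_mul_inv, div_eq_mul_inv, mul_inv, mul_assoc]
  rw [hdm, hdm]
  rw [div_eq_div_iff (by exact mul_ne_zero ha hm) (by exact mul_ne_zero hc hn')]
  rw [conj_tau_conj, conj_tau_conj, hlinv, ← hmain]
  field_simp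
  ring

end Backward

end H2

namespace H2

section Construction

variable (p lam : ℂ)

def gfam : Dk → H2 := fun w => cf p w.1 • kernel (tau p lam (conj w.1))

def Tmap : (Dk →₀ ℂ) →ₗ[ℂ] H2 := Finsupp.linearCombination ℂ kfam

def Tmap' : (Dk →₀ ℂ) →ₗ[ℂ] H2 := Finsupp.linearCombination ℂ (gfam p lam)

def Smap : (Dk →₀ ℂ) → H2 := fun F => Tmap' p lam (F.mapRange conj (map_zero _))

lemma Tmap_apply (F : Dk →₀ ℂ) : Tmap F = ∑ w ∈ F.support, F w • kfam w := by
  rw [Tmap, Finsupp.linearCombination_apply, Finsupp.sum]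

lemma Smap_apply (F : Dk →₀ ℂ) :
    Smap p lam F = ∑ w ∈ F.support, conj (F w) • gfam p lam w := by
  rw [Smap, Tmap', Finsupp.linearCombination_apply]
  rw [Finsupp.sum_mapRange_index (fun w => zero_smul ℂ (gfam p lam w))]
  rw [Finsupp.sum]

lemma Smap_sub (F G : Dk →₀ ℂ) :
    Smap p lam (F - G) = Smap p lam F - Smap p lam G := by
  rw [Smap, Smap, Smap, ← map_sub]
  congr 1
  ext w
  simp [Finsupp.mapRange_apply, map_sub]

lemma Smap_add (F G : Dk →₀ ℂ) :
    Smap p lam (F + G) = Smap p lam F + Smap p lam G := by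
  rw [Smap, Smap, Smap, ← map_add]
  congr 1
  ext w
  simp [Finsupp.mapRange_apply, map_add]

lemma Smap_smul (a : ℂ) (F : Dk →₀ ℂ) :
    Smap p lam (a • F) = conj a • Smap p lam F := by
  rw [Smap, Smap, ← map_smul]
  congr 1
  ext w
  simp [Finsupp.mapRange_apply, map_mul]

variable {p lam}

lemma inner_S_S (hp : ‖p‖ < 1) (hlam : ‖lam‖ = 1) (F G : Dk →₀ ℂ) :
    ⟪Smap p lam F, Smap p lam G⟫_ℂ = ⟪Tmap G, Tmap F⟫_ℂ := by
  rw [Smap_apply, Smap_apply, Tmap_apply, Tmap_apply]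
  simp only [sum_inner, inner_sum, inner_smul_left, inner_smul_right, Complex.conj_conj]
  simp only [Finset.mul_sum]
  rw [Finset.sum_comm]
  apply Finset.sum_congr rfl
  intro w hw
  apply Finset.sum_congr rfl
  intro v hv
  have hg : ⟪gfam p lam w, gfam p lam v⟫_ℂ = ⟪kfam v, kfam w⟫_ℂ := by
    rw [gfam, gfam, kfam, kfam]
    exact inner_g_eq hp hlam w.2 v.2
  rw [hg]
  ring

lemma norm_S (hp : ‖p‖ < 1) (hlam : ‖lam‖ = 1) (F : Dk →₀ ℂ) :
    ‖Smap p lam F‖ = ‖Tmap F‖ := by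
  have h := inner_S_S hp hlam F F
  rw [inner_self_eq_norm_sq_to_K, inner_self_eq_norm_sq_to_K] at h
  have h2 : (‖Smap p lam F‖ : ℝ) ^ 2 = ‖Tmap F‖ ^ 2 := by
    exact_mod_cast h
  have := congrArg Real.sqrt h2
  rwa [Real.sqrt_sq (norm_nonneg _), Real.sqrt_sq (norm_nonneg _)] at this

lemma range_Tmap : LinearMap.range Tmap = KSpan := by
  rw [Tmap, Finsupp.range_linearCombination, KSpan]

lemma exists_T (x : KSpan) : ∃ F : Dk →₀ ℂ, Tmap F = (x : H2) := by
  have : (x : H2) ∈ LinearMap.range Tmap := by rw [range_Tmap]; exact x.2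
  exact this

variable (p lam)

def C0 : KSpan → H2 := fun x => Smap p lam (exists_T x).choose

variable {p lam}

lemma C0_spec (hp : ‖p‖ < 1) (hlam : ‖lam‖ = 1) (x : KSpan) {F : Dk →₀ ℂ}
    (hF : Tmap F = (x : H2)) : C0 p lam x = Smap p lam F := by
  have h2 := (exists_T x).choose_spec
  have h3 : Tmap ((exists_T x).choose - F) = 0 := by
    rw [map_sub, h2, hF, sub_self]
  have h4 : ‖Smap p lam ((exists_T x).choose - F)‖ = 0 := by
    rw [norm_S hp hlam, h3, norm_zero]
  rw [Smap_sub] at h4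
  have h5 := norm_eq_zero.mp h4
  rw [C0]
  rw [sub_eq_zero] at h5
  exact h5

lemma C0_add (hp : ‖p‖ < 1) (hlam : ‖lam‖ = 1) (x y : KSpan) :
    C0 p lam (x + y) = C0 p lam x + C0 p lam y := by
  obtain ⟨F, hF⟩ := exists_T x
  obtain ⟨G, hG⟩ := exists_T y
  rw [C0_spec hp hlam x hF, C0_spec hp hlam y hG,
    C0_spec hp hlam (x + y) (F := F + G) (by rw [map_add, hF, hG]; rfl), Smap_add]

lemma C0_smul (hp : ‖p‖ < 1) (hlam : ‖lam‖ = 1) (a : ℂ) (x : KSpan) :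
    C0 p lam (a • x) = conj a • C0 p lam x := by
  obtain ⟨F, hF⟩ := exists_T x
  rw [C0_spec hp hlam x hF,
    C0_spec hp hlam (a • x) (F := a • F) (by rw [map_smul, hF]; rfl), Smap_smul]

lemma C0_norm (hp : ‖p‖ < 1) (hlam : ‖lam‖ = 1) (x : KSpan) :
    ‖C0 p lam x‖ = ‖x‖ := by
  rw [C0, norm_S hp hlam, (exists_T x).choose_spec]
  rfl

lemma kfam_mem (w : Dk) : kfam w ∈ KSpan :=
  Submodule.subset_span ⟨w, rfl⟩

lemma C0_kernel (hp : ‖p‖ < 1) (hlam : ‖lam‖ = 1) (w : Dk) :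
    C0 p lam ⟨kfam w, kfam_mem w⟩ = gfam p lam w := by
  rw [C0_spec hp hlam _ (F := Finsupp.single w 1)
    (by rw [Tmap, Finsupp.linearCombination_single, one_smul])]
  rw [Smap, Finsupp.mapRange_single, map_one, Tmap', Finsupp.linearCombination_single, one_smul]

def C0SL (hp : ‖p‖ < 1) (hlam : ‖lam‖ = 1) : KSpan →SL[starRingEnd ℂ] H2 :=
  LinearMap.mkContinuous
    { toFun := C0 p lam
      map_add' := C0_add hp hlam
      map_smul' := C0_smul hp hlam } 1
    (fun x => by rw [LinearMap.coe_mk, AddHom.coe_mk, C0_norm hp hlam, one_mul])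

lemma denseRange_subtypeL : DenseRange (KSpan.subtypeL : KSpan →L[ℂ] H2) := by
  have : Set.range (KSpan.subtypeL : KSpan →L[ℂ] H2) = (KSpan : Set H2) := Subtype.range_coe
  rw [DenseRange, this]
  exact kspan_dense

lemma isUniformInducing_subtypeL :
    IsUniformInducing (KSpan.subtypeL : KSpan →L[ℂ] H2) :=
  (isometry_subtype_coe).isUniformInducing

def CC (hp : ‖p‖ < 1) (hlam : ‖lam‖ = 1) : H2 →SL[starRingEnd ℂ] H2 :=
  (C0SL hp hlam).extend KSpan.subtypeL

lemma CC_eq (hp : ‖p‖ < 1) (hlam : ‖lam‖ = 1) (x : KSpan) :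
    CC hp hlam (x : H2) = C0 p lam x :=
  ContinuousLinearMap.extend_eq (C0SL hp hlam) denseRange_subtypeL
    isUniformInducing_subtypeL x

lemma CC_kernel (hp : ‖p‖ < 1) (hlam : ‖lam‖ = 1) (w : Dk) :
    CC hp hlam (kfam w) = gfam p lam w := by
  have := CC_eq hp hlam ⟨kfam w, kfam_mem w⟩
  rw [this, C0_kernel hp hlam]

end Construction

end H2

namespace H2

section Final

variable {p lam : ℂ}

lemma eval_zero' {z : ℂ} : eval (0 : H2) z = 0 := by
  rw [eval]
  have : ((0 : H2) : ∀ _ : ℕ, ℂ) = 0 := lp.coeFn_zero _ _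
  rw [this]
  simp

lemma CC_CC (hp : ‖p‖ < 1) (hlam : ‖lam‖ = 1) (hmain : lam * p = conj p) (x : H2) :
    CC hp hlam (CC hp hlam x) = x := by
  have hcont : Continuous (fun x : H2 => CC hp hlam (CC hp hlam x)) :=
    (CC hp hlam).continuous.comp (CC hp hlam).continuous
  have heq : (fun x : H2 => CC hp hlam (CC hp hlam x)) = id := by
    apply Continuous.ext_on kspan_dense hcont continuous_id
    intro x hx
    induction hx using Submodule.span_induction with
    | mem g hg =>
      obtain ⟨w, rfl⟩ := hg
      show CC hp hlam (CC hp hlam (kfam w)) = kfam w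
      rw [CC_kernel hp hlam w, gfam]
      rw [map_smulₛₗ]
      have hκ : ‖tau p lam (conj w.1)‖ < 1 := norm_kappa_lt_one hp hlam w.2
      have : kernel (tau p lam (conj w.1)) = kfam ⟨tau p lam (conj w.1), hκ⟩ := rfl
      rw [this, CC_kernel hp hlam, gfam]
      show conj (cf p w.1) • (cf p (tau p lam (conj w.1)) •
        kernel (tau p lam (conj (tau p lam (conj w.1))))) = kfam w
      rw [kappa_invol hp hlam hmain w.2, smul_smul, cf_invol hp hlam hmain w.2, one_smul]
      rfl
    | zero => simp
    | add u v hu hv ihu ihv =>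
      simp only [id_eq] at ihu ihv ⊢
      rw [map_add, map_add, ihu, ihv]
    | smul a u hu ihu =>
      simp only [id_eq] at ihu ⊢
      rw [map_smulₛₗ, map_smulₛₗ, ihu]
      simp
  exact congrFun heq x

lemma CC_inner_span (hp : ‖p‖ < 1) (hlam : ‖lam‖ = 1) (x y : KSpan) :
    ⟪CC hp hlam (x : H2), CC hp hlam (y : H2)⟫_ℂ = ⟪(y : H2), (x : H2)⟫_ℂ := by
  obtain ⟨F, hF⟩ := exists_T x
  obtain ⟨G, hG⟩ := exists_T y
  rw [CC_eq hp hlam x, CC_eq hp hlam y, C0_spec hp hlam x hF, C0_spec hp hlam y hG,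
    inner_S_S hp hlam, hF, hG]

lemma CC_inner (hp : ‖p‖ < 1) (hlam : ‖lam‖ = 1) (x y : H2) :
    ⟪CC hp hlam x, CC hp hlam y⟫_ℂ = ⟪y, x⟫_ℂ := by
  have step2 : ∀ y' : KSpan, ∀ x : H2,
      ⟪CC hp hlam x, CC hp hlam (y' : H2)⟫_ℂ = ⟪(y' : H2), x⟫_ℂ := by
    intro y'
    have hf : Continuous (fun x : H2 => ⟪CC hp hlam x, CC hp hlam (y' : H2)⟫_ℂ) :=
      ((CC hp hlam).continuous).inner continuous_const
    have hg : Continuous (fun x : H2 => ⟪(y' : H2), x⟫_ℂ) :=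
      continuous_const.inner continuous_id
    have := Continuous.ext_on kspan_dense hf hg (fun x hx => CC_inner_span hp hlam ⟨x, hx⟩ y')
    exact fun x => congrFun this x
  have hf : Continuous (fun y : H2 => ⟪CC hp hlam x, CC hp hlam y⟫_ℂ) :=
    continuous_const.inner (CC hp hlam).continuous
  have hg : Continuous (fun y : H2 => ⟪y, x⟫_ℂ) := continuous_id.inner continuous_const
  have := Continuous.ext_on kspan_dense hf hg (fun y hy => step2 ⟨y, hy⟩ x)
  exact congrFun this y

end Final

end H2

namespace H2

lemma CC_isJW {p lam : ℂ} (hp : ‖p‖ < 1) (hlam : ‖lam‖ = 1) (hmain : lam * p = conj p) :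
    IsJW p lam (CC hp hlam) := by
  intro f z hz
  have hτz : ‖tau p lam (conj z)‖ < 1 := norm_kappa_lt_one hp hlam hz
  have key : (fun f : H2 => eval (CC hp hlam f) z)
      = fun f : H2 => conj (xi p (conj z)) * conj (eval f (tau p lam (conj z))) := by
    have hf : Continuous (fun f : H2 => eval (CC hp hlam f) z) := by
      exact (eval_continuous hz).comp (CC hp hlam).continuous
    have hg : Continuous
        (fun f : H2 => conj (xi p (conj z)) * conj (eval f (tau p lam (conj z)))) :=
      continuous_const.mul (continuous_conj.comp (eval_continuous hτz))
    apply Continuous.ext_on kspan_dense hf hg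
    intro x hx
    induction hx using Submodule.span_induction with
    | mem g hg =>
      obtain ⟨w, rfl⟩ := hg
      show eval (CC hp hlam (kfam w)) z = _
      show eval (CC hp hlam (kfam w)) z
        = conj (xi p (conj z)) * conj (eval (kernel w.1) (tau p lam (conj z)))
      rw [CC_kernel hp hlam w, gfam, eval_smul hz, eval_kernel (norm_kappa_lt_one hp hlam w.2) hz]
      rw [eval_kernel w.2 hτz]
      rw [eval_g_eq hp hlam hmain w.2 hz]
      rw [map_mul]
    | zero =>
      simp only [map_zero, eval_zero']
      simp
    | add u v hu hv ihu ihv =>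
      simp only at ihu ihv ⊢
      rw [map_add, eval_add hz, eval_add hτz, ihu, ihv, map_add]
      ring
    | smul a u hu ihu =>
      simp only at ihu ⊢
      rw [map_smulₛₗ, eval_smul hz, eval_smul hτz, ihu, map_mul]
      ring
  have := congrFun key f
  rw [this, map_mul]

theorem backward {p lam : ℂ} (hp : ‖p‖ < 1) (hlam : ‖lam‖ = 1) (hmain : lam * p = conj p) :
    ∃ C : H2 → H2, IsConjugation C ∧ IsJW p lam C := by
  refine ⟨⇑(CC hp hlam), ⟨?_, ?_, CC_CC hp hlam hmain, CC_inner hp hlam⟩, CC_isJW hp hlam hmain⟩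
  · exact fun x y => map_add _ x y
  · exact fun c x => (CC hp hlam).map_smulₛₗ c x

end H2

/-- Lemma 2.2: for `p ∈ 𝔻` and `|λ| = 1`, the conjugate-linear map `J W_{ξ_p, τ_p}` given by
`f ↦ conj (ξ_p (conj z) * f (τ_p (conj z)))` is a conjugation on `H²` iff `λ p = conj p`. -/
theorem stmt15 (p lam : ℂ) (hp : ‖p‖ < 1) (hlam : ‖lam‖ = 1) :
    (∃ C : H2 → H2, H2.IsConjugation C ∧ H2.IsJW p lam C) ↔ lam * p = conj p := by
  constructor
  · rintro ⟨C, hC, hJW⟩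
    exact H2.forward p lam hp hlam C hC hJW
  · intro hmain
    exact H2.backward hp hlam hmain
end
end

section
/- Let φ be an analytic self-map of the open unit disk 𝔻. Then the composition operator C_φ on H² is normal if and only if φ(z) = αz for some α ∈ ℂ with |α| ≤ 1. -/
open scoped ComplexConjugate InnerProductSpace ENNReal NNReal
open Complex Metric

noncomputable section

set_option maxHeartbeats 1000000 in
open FormalMultilinearSeries in
lemma H2.radius_ge (f : H2) : 1 ≤ (ofScalars ℂ (fun n => (f : ∀ _ : ℕ, ℂ) n)).radius := by
  refine ENNReal.le_of_forall_nnreal_lt fun r hr => ?_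
  refine le_radius_of_bound _ ‖f‖ fun n => ?_
  have h1 : ‖(ofScalars ℂ (fun n => (f : ∀ _ : ℕ, ℂ) n)) n‖ = ‖(f : ∀ _ : ℕ, ℂ) n‖ :=
    ofScalars_norm ℂ _ n
  have h2 : ‖(f : ∀ _ : ℕ, ℂ) n‖ ≤ ‖f‖ := lp.norm_apply_le_norm (by norm_num) f n
  have h3 : (r : ℝ) ^ n ≤ 1 := pow_le_one₀ r.coe_nonneg (by exact_mod_cast hr.le)
  calc ‖(ofScalars ℂ (fun n => (f : ∀ _ : ℕ, ℂ) n)) n‖ * (r:ℝ)^n ≤ ‖f‖ * 1 := by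
        rw [h1]; exact mul_le_mul h2 h3 (by positivity) (norm_nonneg _)
    _ = ‖f‖ := mul_one _

open FormalMultilinearSeries in
lemma H2.hasFPS (f : H2) :
    HasFPowerSeriesOnBall (H2.eval f) (ofScalars ℂ (fun n => (f : ∀ _ : ℕ, ℂ) n)) 0 1 := by
  have h0 : (0:ℝ≥0∞) < 1 := by norm_num
  have h := ((ofScalars ℂ (fun n => (f : ∀ _ : ℕ, ℂ) n)).hasFPowerSeriesOnBall
    (lt_of_lt_of_le h0 (H2.radius_ge f))).mono h0 (H2.radius_ge f)
  have he : H2.eval f = (ofScalars ℂ (fun n => (f : ∀ _ : ℕ, ℂ) n)).sum := by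
    funext z
    exact tsum_congr fun n => by rw [ofScalars_apply_eq]; simp [smul_eq_mul]
  rw [he]; exact h

lemma H2.eval_injOn {f g : H2} (h : ∀ z : ℂ, ‖z‖ < 1 → H2.eval f z = H2.eval g z) : f = g := by
  have hf := (H2.hasFPS f).hasFPowerSeriesAt
  have hg := (H2.hasFPS g).hasFPowerSeriesAt
  have heq : H2.eval f =ᶠ[nhds 0] H2.eval g := by
    have hb : Metric.ball (0:ℂ) 1 ∈ nhds (0:ℂ) := Metric.ball_mem_nhds 0 one_pos
    filter_upwards [hb] with z hz
    exact h z (by simpa using hz)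
  have hser := hf.eq_formalMultilinearSeries_of_eventually hg heq
  have hcoef : (fun n => (f : ∀ _ : ℕ, ℂ) n) = fun n => (g : ∀ _ : ℕ, ℂ) n :=
    FormalMultilinearSeries.ofScalars_series_injective ℂ ℂ hser
  exact lp.ext hcoef

lemma H2.coeff_one (f : H2) : deriv (H2.eval f) 0 = (f : ∀ _ : ℕ, ℂ) 1 := by
  rw [(H2.hasFPS f).hasFPowerSeriesAt.deriv]
  simp [FormalMultilinearSeries.coeff, FormalMultilinearSeries.ofScalars]

lemma H2.diffAt (f : H2) {z : ℂ} (hz : ‖z‖ < 1) : DifferentiableAt ℂ (H2.eval f) z := by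
  have hmem : z ∈ Metric.eball (0:ℂ) 1 := by
    rw [EMetric.mem_ball, edist_zero_right, enorm_eq_nnnorm]
    exact_mod_cast (show (‖z‖₊ : ℝ≥0∞) < 1 by exact_mod_cast hz)
  exact ((H2.hasFPS f).analyticAt_of_mem hmem).differentiableAt

lemma H2.eval_zero'_s16 (f : H2) : H2.eval f 0 = (f : ∀ _ : ℕ, ℂ) 0 := by
  rw [H2.eval, tsum_eq_single 0 (fun n hn => by simp [zero_pow hn])]
  simp

lemma H2.kernel_apply {w : ℂ} (hw : ‖w‖ < 1) (n : ℕ) :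
    (H2.kernel w : ∀ _ : ℕ, ℂ) n = (conj w) ^ n := by
  rw [H2.kernel, dif_pos hw]

lemma H2.inner_kernel_left {w : ℂ} (hw : ‖w‖ < 1) (f : H2) :
    ⟪H2.kernel w, f⟫_ℂ = H2.eval f w := by
  rw [lp.inner_eq_tsum, H2.eval]
  exact tsum_congr fun n => by
    rw [RCLike.inner_apply, H2.kernel_apply hw, map_pow, Complex.conj_conj]

lemma H2.inner_single_left' (n : ℕ) (f : H2) :
    ⟪lp.single 2 n (1:ℂ), f⟫_ℂ = (f : ∀ _ : ℕ, ℂ) n := by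
  rw [lp.inner_single_left]; simp

lemma H2.eval_single (n : ℕ) (c : ℂ) (z : ℂ) :
    H2.eval (lp.single 2 n c) z = c * z ^ n := by
  rw [H2.eval, tsum_eq_single n (fun m hm => by rw [lp.single_apply]; simp [hm])]
  rw [lp.single_apply]; simp

lemma H2.eval_smul_s16 (a : ℂ) (f : H2) (z : ℂ) :
    H2.eval (a • f) z = a * H2.eval f z := by
  rw [H2.eval, H2.eval, ← tsum_mul_left]
  exact tsum_congr fun n => by rw [lp.coeFn_smul]; simp [smul_eq_mul]; ring

lemma H2.normal_inner {T : H2 →L[ℂ] H2} (h : H2.IsNormalOp T) (x : H2) :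
    ⟪T x, T x⟫_ℂ = ⟪(ContinuousLinearMap.adjoint T) x, (ContinuousLinearMap.adjoint T) x⟫_ℂ := by
  have h1 : (ContinuousLinearMap.adjoint T) (T x) = T ((ContinuousLinearMap.adjoint T) x) :=
    congrFun (congrArg DFunLike.coe h) x
  calc ⟪T x, T x⟫_ℂ = ⟪(ContinuousLinearMap.adjoint T) (T x), x⟫_ℂ :=
        (ContinuousLinearMap.adjoint_inner_left T x (T x)).symm
    _ = ⟪T ((ContinuousLinearMap.adjoint T) x), x⟫_ℂ := by rw [h1]
    _ = ⟪(ContinuousLinearMap.adjoint T) x, (ContinuousLinearMap.adjoint T) x⟫_ℂ :=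
        (ContinuousLinearMap.adjoint_inner_right T ((ContinuousLinearMap.adjoint T) x) x).symm

set_option maxHeartbeats 1000000 in
lemma H2.forward_s16 (φ : ℂ → ℂ) (hself : ∀ z : ℂ, ‖z‖ < 1 → ‖φ z‖ < 1)
    (T : H2 →L[ℂ] H2) (hT : H2.IsCompOp φ T) (hN : H2.IsNormalOp T) :
    ∃ α : ℂ, ‖α‖ ≤ 1 ∧ ∀ z : ℂ, ‖z‖ < 1 → φ z = α * z := by
  set T' := ContinuousLinearMap.adjoint T with hT'
  have h0lt : ‖(0:ℂ)‖ < 1 := by norm_num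
  set e0 : H2 := lp.single 2 0 (1:ℂ) with he0
  set e1 : H2 := lp.single 2 1 (1:ℂ) with he1
  -- T e0 = e0
  have hTe0 : T e0 = e0 := by
    refine H2.eval_injOn fun z hz => ?_
    rw [hT e0 z hz, H2.eval_single, H2.eval_single]
    simp
  -- T' e0 = kernel (φ 0)
  have hT'e0 : T' e0 = H2.kernel (φ 0) := by
    refine ext_inner_right ℂ fun f => ?_
    rw [hT', ContinuousLinearMap.adjoint_inner_left, he0, H2.inner_single_left',
      ← H2.eval_zero'_s16 (T f), hT f 0 h0lt, H2.inner_kernel_left (hself 0 h0lt)]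
  -- step 1 : φ 0 = 0
  have hphi0 : φ 0 = 0 := by
    have key := H2.normal_inner hN e0
    rw [hTe0, ← hT', hT'e0] at key
    rw [he0, H2.inner_single_left'] at key
    rw [H2.inner_kernel_left (hself 0 h0lt), H2.eval] at key
    have hker : ∀ n : ℕ, (H2.kernel (φ 0) : ∀ _ : ℕ, ℂ) n * (φ 0) ^ n
        = ((conj (φ 0)) * φ 0) ^ n := fun n => by
      rw [H2.kernel_apply (hself 0 h0lt), mul_pow]
    rw [tsum_congr hker] at key
    have hnorm : ‖conj (φ 0) * φ 0‖ < 1 := by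
      rw [norm_mul, RCLike.norm_conj]
      nlinarith [hself 0 h0lt, norm_nonneg (φ 0)]
    rw [tsum_geometric_of_norm_lt_one hnorm] at key
    have he00 : ((lp.single 2 0 (1:ℂ) : H2) : ∀ _ : ℕ, ℂ) 0 = 1 := by
      rw [lp.single_apply]; simp
    rw [he00] at key
    rw [eq_comm, inv_eq_one] at key
    have h3 : conj (φ 0) * φ 0 = 0 := by linear_combination -key
    have h4 : Complex.normSq (φ 0) = 0 := by
      have := Complex.mul_conj (φ 0)
      apply_fun Complex.ofReal using Complex.ofReal_injective
      rw [← this]; push_cast; linear_combination h3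
    exact Complex.normSq_eq_zero.mp h4
  -- g = T e1, eval g = φ on the disk
  set g : H2 := T e1 with hg
  have hgeval : ∀ z : ℂ, ‖z‖ < 1 → H2.eval g z = φ z := by
    intro z hz
    rw [hg, hT e1 z hz, he1, H2.eval_single, one_mul, pow_one]
  have hg0 : (g : ∀ _ : ℕ, ℂ) 0 = 0 := by
    rw [← H2.eval_zero'_s16, hgeval 0 h0lt, hphi0]
  -- coefficient 1 of T f
  have hcoef : ∀ f : H2, ((T f : H2) : ∀ _ : ℕ, ℂ) 1 = (g : ∀ _ : ℕ, ℂ) 1 * (f : ∀ _ : ℕ, ℂ) 1 := by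
    intro f
    have hev : H2.eval (T f) =ᶠ[nhds 0] (H2.eval f ∘ H2.eval g) := by
      have hb : Metric.ball (0:ℂ) 1 ∈ nhds (0:ℂ) := Metric.ball_mem_nhds 0 one_pos
      filter_upwards [hb] with z hz
      have hz' : ‖z‖ < 1 := by simpa using hz
      rw [hT f z hz', Function.comp_apply, hgeval z hz']
    have hg00 : H2.eval g 0 = 0 := by rw [H2.eval_zero'_s16, hg0]
    have hd : deriv (H2.eval f ∘ H2.eval g) 0
        = deriv (H2.eval f) (H2.eval g 0) * deriv (H2.eval g) 0 := by
      apply deriv_comp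
      · rw [hg00]; exact H2.diffAt f h0lt
      · exact H2.diffAt g h0lt
    rw [← H2.coeff_one, hev.deriv_eq, hd, hg00, H2.coeff_one, H2.coeff_one]
    ring
  -- T' e1 = conj (g 1) • e1
  have hT'e1 : T' e1 = (conj ((g : ∀ _ : ℕ, ℂ) 1)) • e1 := by
    refine ext_inner_right ℂ fun f => ?_
    rw [hT', ContinuousLinearMap.adjoint_inner_left, he1, H2.inner_single_left',
      hcoef f, inner_smul_left, H2.inner_single_left']
    simp
  -- normality at e1
  have key := H2.normal_inner hN e1
  rw [← hg, ← hT', hT'e1, inner_smul_left, inner_smul_right, he1, H2.inner_single_left'] at key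
  rw [lp.single_apply] at key
  simp only [Complex.conj_conj] at key
  -- key : ⟪g, g⟫ = g1 * conj g1 * 1-ish; turn into real statement
  rw [lp.inner_eq_tsum] at key
  have hterm : ∀ n : ℕ, ⟪(g : ∀ _ : ℕ, ℂ) n, (g : ∀ _ : ℕ, ℂ) n⟫_ℂ
      = ((Complex.normSq ((g : ∀ _ : ℕ, ℂ) n) : ℝ) : ℂ) := fun n => by
    rw [RCLike.inner_apply]
    rw [Complex.mul_conj]
  rw [tsum_congr hterm, ← Complex.ofReal_tsum] at key
  have hrhs : ((g : ∀ _ : ℕ, ℂ) 1) * conj ((g : ∀ _ : ℕ, ℂ) 1) * (if (1:ℕ) = 1 then (1:ℂ) else 0)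
      = ((Complex.normSq ((g : ∀ _ : ℕ, ℂ) 1) : ℝ) : ℂ) := by
    rw [if_pos rfl, mul_one, Complex.mul_conj]
  have keyR : (∑' n : ℕ, Complex.normSq ((g : ∀ _ : ℕ, ℂ) n))
      = Complex.normSq ((g : ∀ _ : ℕ, ℂ) 1) := by
    apply Complex.ofReal_injective
    rw [key]
    rw [Pi.single_eq_same, mul_one, Complex.mul_conj]
  -- summability
  have hsummable : Summable (fun n : ℕ => Complex.normSq ((g : ∀ _ : ℕ, ℂ) n)) := by
    have hm := lp.memℓp g
    have hs := hm.summable (by norm_num)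
    refine hs.congr fun n => ?_
    have h2 : ((2 : ℝ≥0∞).toReal) = ((2 : ℕ) : ℝ) := by simp
    rw [h2, Real.rpow_natCast, Complex.normSq_eq_norm_sq]
  -- all other coefficients vanish
  have hvanish : ∀ n : ℕ, n ≠ 1 → (g : ∀ _ : ℕ, ℂ) n = 0 := by
    intro n hn
    have hsub : ({1, n} : Finset ℕ).sum (fun m => Complex.normSq ((g : ∀ _ : ℕ, ℂ) m))
        ≤ ∑' m : ℕ, Complex.normSq ((g : ∀ _ : ℕ, ℂ) m) :=
      Summable.sum_le_tsum _ (fun m _ => Complex.normSq_nonneg _) hsummable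
    rw [Finset.sum_pair (Ne.symm hn), keyR] at hsub
    have : Complex.normSq ((g : ∀ _ : ℕ, ℂ) n) ≤ 0 := by linarith
    exact Complex.normSq_eq_zero.mp (le_antisymm this (Complex.normSq_nonneg _))
  -- conclusion
  refine ⟨(g : ∀ _ : ℕ, ℂ) 1, ?_, ?_⟩
  · by_contra hgt
    push_neg at hgt
    set a := (g : ∀ _ : ℕ, ℂ) 1
    have ha : (0:ℝ) < ‖a‖ := lt_trans one_pos hgt
    have hz : ‖((‖a‖⁻¹ : ℝ) : ℂ)‖ < 1 := by
      rw [Complex.norm_real, Real.norm_eq_abs, abs_of_pos (inv_pos.mpr ha)]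
      exact inv_lt_one_of_one_lt₀ hgt
    have := hself _ hz
    rw [show φ (((‖a‖⁻¹ : ℝ) : ℂ)) = a * ((‖a‖⁻¹ : ℝ) : ℂ) from ?_] at this
    · rw [norm_mul, Complex.norm_real, Real.norm_eq_abs, abs_of_pos (inv_pos.mpr ha),
        mul_inv_cancel₀ (ne_of_gt ha)] at this
      exact lt_irrefl _ this
    · rw [← hgeval _ hz, H2.eval, tsum_eq_single 1 (fun m hm => by
        rw [hvanish m hm]; ring), pow_one]
  · intro z hz
    rw [← hgeval z hz, H2.eval, tsum_eq_single 1 (fun m hm => by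
      rw [hvanish m hm]; ring), pow_one]
set_option maxHeartbeats 1000000 in
lemma H2.backward_s16 (φ : ℂ → ℂ) (α : ℂ) (T : H2 →L[ℂ] H2) (hT : H2.IsCompOp φ T)
    (hα : ∀ z : ℂ, ‖z‖ < 1 → φ z = α * z) : H2.IsNormalOp T := by
  have claimA : ∀ (n : ℕ) (c : ℂ), T (lp.single 2 n c) = α ^ n • lp.single 2 n c := by
    intro n c
    refine H2.eval_injOn fun z hz => ?_
    rw [hT _ z hz, H2.eval_single, H2.eval_smul_s16, H2.eval_single, hα z hz, mul_pow]
    ring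
  have claimB : ∀ (f : H2) (n : ℕ), ((T f : H2) : ∀ _ : ℕ, ℂ) n = α ^ n * (f : ∀ _ : ℕ, ℂ) n := by
    intro f n
    have hs := lp.hasSum_single (E := fun _ : ℕ => ℂ) (p := 2) (by norm_num) f
    have h2 := (hs.mapL T).mapL (innerSL ℂ (lp.single 2 n (1:ℂ)))
    have h3 : (fun k : ℕ => (innerSL ℂ (lp.single 2 n (1:ℂ))) (T (lp.single 2 k ((f : ∀ _:ℕ, ℂ) k))))
        = fun k : ℕ => if k = n then α ^ n * (f : ∀ _:ℕ, ℂ) n else 0 := by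
      funext k
      rw [innerSL_apply_apply, claimA, inner_smul_right, H2.inner_single_left']
      by_cases hk : k = n
      · subst hk; rw [if_pos rfl, lp.single_apply_self]
      · rw [if_neg hk, lp.single_apply_ne _ _ _ (Ne.symm hk), mul_zero]
    rw [h3] at h2
    have h4 : HasSum (fun k : ℕ => if k = n then α ^ n * (f : ∀ _:ℕ, ℂ) n else 0)
        (α ^ n * (f : ∀ _:ℕ, ℂ) n) := hasSum_ite_eq n _
    have h5 := h2.unique h4
    rw [← h5, innerSL_apply_apply, H2.inner_single_left']
  have claimC : ∀ (y : H2) (n : ℕ), ((ContinuousLinearMap.adjoint T y : H2) : ∀ _ : ℕ, ℂ) n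
      = conj (α ^ n) * (y : ∀ _ : ℕ, ℂ) n := by
    intro y n
    rw [← H2.inner_single_left', ContinuousLinearMap.adjoint_inner_right, claimA,
      inner_smul_left, H2.inner_single_left']
  refine ContinuousLinearMap.ext fun x => ?_
  refine lp.ext (funext fun n => ?_)
  rw [ContinuousLinearMap.comp_apply, ContinuousLinearMap.comp_apply, claimC, claimB, claimB, claimC]
  ring

/-- Lemma: for an analytic self-map `φ` of `𝔻`, the composition operator `C_φ` is normal
on `H²` iff `φ(z) = α z` with `|α| ≤ 1`. -/
theorem stmt16 (φ : ℂ → ℂ)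
    (hφa : DifferentiableOn ℂ φ (Metric.ball (0 : ℂ) 1))
    (hself : ∀ z : ℂ, ‖z‖ < 1 → ‖φ z‖ < 1)
    (T : H2 →L[ℂ] H2) (hT : H2.IsCompOp φ T) :
    H2.IsNormalOp T ↔ ∃ α : ℂ, ‖α‖ ≤ 1 ∧ ∀ z : ℂ, ‖z‖ < 1 → φ z = α * z := by
  constructor
  · exact fun h => H2.forward_s16 φ hself T hT h
  · rintro ⟨α, -, hα⟩
    exact H2.backward_s16 φ α T hT hα
end
end
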